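/- (Strong BK inequality) For increasing events A, B ⊆ {0,1}^n, P[A ∘ B] ≤ P[(A,B) occurs disjointly on (ω, ξ)], where ω and ξ are independent uniform configurations; in particular P[A ∘ B] ≤ P[A]·P[B]. -/
import Mathlib


open Finset

/-- `(x, I)` is a witness for `A`: every configuration agreeing with `x` on `I` lies in `A`. -/
def IsWitness {n : ℕ} (A : Set (Fin n → Bool)) (x : Fin n → Bool) (I : Finset (Fin n)) : Prop :=
  ∀ y : Fin n → Bool, (∀ i ∈ I, y i = x i) → y ∈ A

/-- `(A, B)` occurs disjointly on `(x, y)`: there are disjoint witness sets `I` for `A` in `x`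
and `J` for `B` in `y`. -/
def OccursDisjointly {n : ℕ} (A B : Set (Fin n → Bool)) (x y : Fin n → Bool) : Prop :=
  ∃ I J : Finset (Fin n), Disjoint I J ∧ IsWitness A x I ∧ IsWitness B y J

/-- An event is increasing if it is upward closed in the coordinatewise order. -/
def IncreasingEvent {n : ℕ} (A : Set (Fin n → Bool)) : Prop :=
  ∀ x y : Fin n → Bool, (∀ i, x i ≤ y i) → x ∈ A → y ∈ A

/-- Coordinatewise colour flip. -/
def flipConf {n : ℕ} (x : Fin n → Bool) : Fin n → Bool := fun i => !(x i)

/-- `B̄ = {x̄ : x ∈ B}`. -/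
def flipSet {n : ℕ} (B : Set (Fin n → Bool)) : Set (Fin n → Bool) := flipConf '' B

attribute [local instance] Classical.propDecidable

/-- The disjoint occurrence event `A ∘ B`. -/
def disjOcc {n : ℕ} (A B : Set (Fin n → Bool)) : Set (Fin n → Bool) :=
  {x | OccursDisjointly A B x x}

/-- Uniform probability of an event on `{0,1}^n`. -/
noncomputable def Pr {n : ℕ} (A : Set (Fin n → Bool)) : ℝ :=
  ((Finset.univ.filter fun x => x ∈ A).card : ℝ) / 2 ^ n

/-- Probability that `(A,B)` occurs disjointly on an independent uniform pair `(ω, ξ)`. -/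
noncomputable def PrPairDisj {n : ℕ} (A B : Set (Fin n → Bool)) : ℝ :=
  (∑ x : Fin n → Bool, ∑ y : Fin n → Bool,
    if OccursDisjointly A B x y then (1:ℝ) else 0) / (2 ^ n * 2 ^ n)

/-! ### Auxiliary lemmas -/

lemma BK_witness_self {n : ℕ} {A : Set (Fin n → Bool)} {x : Fin n → Bool} {I : Finset (Fin n)}
    (h : IsWitness A x I) : x ∈ A :=
  h x fun _ _ => rfl

lemma BK_witness_congr {n : ℕ} {A : Set (Fin n → Bool)} {x x' : Fin n → Bool} {I : Finset (Fin n)}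
    (h : IsWitness A x I) (hxx : ∀ i ∈ I, x' i = x i) : IsWitness A x' I :=
  fun y hy => h y fun i hi => (hy i hi).trans (hxx i hi)

lemma BK_witness_prune {n : ℕ} {A : Set (Fin n → Bool)} (hA : IncreasingEvent A)
    {x : Fin n → Bool} {I : Finset (Fin n)} (h : IsWitness A x I) :
    IsWitness A x (I.filter fun i => x i = true) := by
  intro y hy
  set I' := I.filter fun i => x i = true with hI'
  have hz : (fun i => if i ∈ I' then x i else false) ∈ A := by
    apply h
    intro i hi
    by_cases hi' : i ∈ I'
    · simp [hi']
    · have hx : x i = false := by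
        by_contra hxi
        exact hi' (Finset.mem_filter.2 ⟨hi, by simpa using hxi⟩)
      simp [hi', hx]
  apply hA _ _ _ hz
  intro i
  by_cases hi' : i ∈ I'
  · have hx : x i = true := (Finset.mem_filter.1 hi').2
    have hyi := hy i hi'
    simp [hi', hx, hyi]
  · simp [hi']

/-- The hybrid configuration: `y` below `k`, `x` from `k` on. -/
def BKhyb {n : ℕ} (k : ℕ) (x y : Fin n → Bool) : Fin n → Bool :=
  fun i => if (i : ℕ) < k then y i else x i

lemma BKhyb_zero {n : ℕ} (x y : Fin n → Bool) : BKhyb 0 x y = x := by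
  funext i; simp [BKhyb]

lemma BKhyb_top {n : ℕ} (x y : Fin n → Bool) : BKhyb n x y = y := by
  funext i; simp [BKhyb, i.isLt]

lemma BKhyb_update_self {n : ℕ} (k : Fin n) (x y : Fin n → Bool) (a b : Bool) :
    BKhyb k.1 (Function.update x k a) (Function.update y k b)
      = Function.update (BKhyb k.1 x y) k a := by
  funext i
  rcases eq_or_ne i k with rfl | h
  · simp [BKhyb]
  · simp [BKhyb, Function.update_of_ne h]

lemma BKhyb_update_succ {n : ℕ} (k : Fin n) (x y : Fin n → Bool) (a b : Bool) :
    BKhyb (k.1 + 1) (Function.update x k a) (Function.update y k b)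
      = Function.update (BKhyb k.1 x y) k b := by
  funext i
  rcases eq_or_ne i k with rfl | h
  · simp [BKhyb]
  · have h' : (i : ℕ) ≠ (k : ℕ) := fun hc => h (Fin.ext hc)
    simp only [BKhyb, Function.update_of_ne h]
    rcases lt_trichotomy (i : ℕ) (k : ℕ) with hlt | heq | hgt
    · simp [hlt, Nat.lt_succ_of_lt hlt]
    · exact absurd heq h'
    · have h1 : ¬ (i : ℕ) < (k : ℕ) := by omega
      have h2 : ¬ (i : ℕ) < (k : ℕ) + 1 := by omega
      simp [h1, h2]

lemma BK_occ_off_diag {n : ℕ} {A B : Set (Fin n → Bool)} (hA : IncreasingEvent A)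
    (hB : IncreasingEvent B) {x z : Fin n → Bool} {k : Fin n}
    (h : OccursDisjointly A B (Function.update x k false) (Function.update z k false))
    (a b : Bool) :
    OccursDisjointly A B (Function.update x k a) (Function.update z k b) := by
  obtain ⟨I, J, hIJ, hI, hJ⟩ := h
  refine ⟨I.filter fun i => Function.update x k false i = true,
          J.filter fun i => Function.update z k false i = true,
          hIJ.mono (Finset.filter_subset _ _) (Finset.filter_subset _ _), ?_, ?_⟩
  · refine BK_witness_congr (BK_witness_prune hA hI) fun i hi => ?_
    have hik : i ≠ k := by
      rintro rfl
      have := (Finset.mem_filter.1 hi).2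
      simp at this
    simp [Function.update_of_ne hik]
  · refine BK_witness_congr (BK_witness_prune hB hJ) fun i hi => ?_
    have hik : i ≠ k := by
      rintro rfl
      have := (Finset.mem_filter.1 hi).2
      simp at this
    simp [Function.update_of_ne hik]

lemma BK_occ_true_split {n : ℕ} {A B : Set (Fin n → Bool)} {x z : Fin n → Bool} {k : Fin n}
    (h : OccursDisjointly A B (Function.update x k true) (Function.update z k true)) :
    OccursDisjointly A B (Function.update x k true) (Function.update z k false) ∨
    OccursDisjointly A B (Function.update x k false) (Function.update z k true) := by
  obtain ⟨I, J, hIJ, hI, hJ⟩ := h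
  by_cases hkJ : k ∈ J
  · right
    have hkI : k ∉ I := fun hkI => (Finset.disjoint_left.1 hIJ hkI) hkJ
    refine ⟨I, J, hIJ, ?_, hJ⟩
    refine BK_witness_congr hI fun i hi => ?_
    have hik : i ≠ k := fun h => hkI (h ▸ hi)
    simp [Function.update_of_ne hik]
  · left
    refine ⟨I, J, hIJ, hI, ?_⟩
    refine BK_witness_congr hJ fun i hi => ?_
    have hik : i ≠ k := fun h => hkJ (h ▸ hi)
    simp [Function.update_of_ne hik]

lemma BK_block {n : ℕ} {A B : Set (Fin n → Bool)} (hA : IncreasingEvent A)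
    (hB : IncreasingEvent B) (x z : Fin n → Bool) (k : Fin n) :
    (2:ℝ) * ((if OccursDisjointly A B (Function.update x k true) (Function.update z k true) then (1:ℝ) else 0)
      + (if OccursDisjointly A B (Function.update x k false) (Function.update z k false) then (1:ℝ) else 0))
    ≤ (if OccursDisjointly A B (Function.update x k true) (Function.update z k true) then (1:ℝ) else 0)
      + (if OccursDisjointly A B (Function.update x k true) (Function.update z k false) then (1:ℝ) else 0)
      + (if OccursDisjointly A B (Function.update x k false) (Function.update z k true) then (1:ℝ) else 0)
      + (if OccursDisjointly A B (Function.update x k false) (Function.update z k false) then (1:ℝ) else 0) := by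
  by_cases hff : OccursDisjointly A B (Function.update x k false) (Function.update z k false)
  · have h1 := BK_occ_off_diag hA hB hff true true
    have h2 := BK_occ_off_diag hA hB hff true false
    have h3 := BK_occ_off_diag hA hB hff false true
    simp only [h1, h2, h3, hff, if_pos]
    norm_num
  · by_cases htt : OccursDisjointly A B (Function.update x k true) (Function.update z k true)
    · rcases BK_occ_true_split htt with h | h
      · simp [htt, hff, h]
        have h0 : (0:ℝ) ≤ (if OccursDisjointly A B (Function.update x k false) (Function.update z k true) then (1:ℝ) else 0) := by
          split <;> norm_num
        linarith
      · simp [htt, hff, h]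
        have h0 : (0:ℝ) ≤ (if OccursDisjointly A B (Function.update x k true) (Function.update z k false) then (1:ℝ) else 0) := by
          split <;> norm_num
        linarith
    · simp [htt, hff]
      have h0 : (0:ℝ) ≤ (if OccursDisjointly A B (Function.update x k true) (Function.update z k false) then (1:ℝ) else 0) := by
        split <;> norm_num
      have h1 : (0:ℝ) ≤ (if OccursDisjointly A B (Function.update x k false) (Function.update z k true) then (1:ℝ) else 0) := by
        split <;> norm_num
      linarith

/-- Flipping one coordinate is a permutation of configurations. -/
def BKflipAt {n : ℕ} (k : Fin n) : Equiv.Perm (Fin n → Bool) where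
  toFun x := Function.update x k (!(x k))
  invFun x := Function.update x k (!(x k))
  left_inv x := by
    funext i
    rcases eq_or_ne i k with rfl | h
    · simp
    · simp [Function.update_of_ne h]
  right_inv x := by
    funext i
    rcases eq_or_ne i k with rfl | h
    · simp
    · simp [Function.update_of_ne h]

lemma BK_sum_update {n : ℕ} (g : (Fin n → Bool) → ℝ) (k : Fin n) :
    ∑ x : Fin n → Bool, (g (Function.update x k true) + g (Function.update x k false))
      = 2 * ∑ x : Fin n → Bool, g x := by
  have h1 : ∑ x : Fin n → Bool, g (BKflipAt k x) = ∑ x : Fin n → Bool, g x :=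
    Equiv.sum_comp (BKflipAt k) g
  have h2 : ∀ x : Fin n → Bool,
      g (Function.update x k true) + g (Function.update x k false) = g x + g (BKflipAt k x) := by
    intro x
    cases hx : x k
    · have hxx : Function.update x k false = x := by
        funext i
        rcases eq_or_ne i k with rfl | h
        · simp [hx]
        · simp [Function.update_of_ne h]
      have hfx : BKflipAt k x = Function.update x k true := by
        simp [BKflipAt, hx]
      rw [hxx, hfx]; ring
    · have hxx : Function.update x k true = x := by
        funext i
        rcases eq_or_ne i k with rfl | h
        · simp [hx]
        · simp [Function.update_of_ne h]
      have hfx : BKflipAt k x = Function.update x k false := by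
        simp [BKflipAt, hx]
      rw [hxx, hfx]
  rw [Finset.sum_congr rfl fun x _ => h2 x, Finset.sum_add_distrib, h1]
  ring

/-- The interpolating quantity. -/
noncomputable def BKS {n : ℕ} (A B : Set (Fin n → Bool)) (k : ℕ) : ℝ :=
  ∑ x : Fin n → Bool, ∑ y : Fin n → Bool,
    if OccursDisjointly A B x (BKhyb k x y) then (1:ℝ) else 0

lemma BKS_expand {n : ℕ} (A B : Set (Fin n → Bool)) (k : ℕ) (kk : Fin n) :
    4 * BKS A B k = ∑ x : Fin n → Bool, ∑ y : Fin n → Bool,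
      ((if OccursDisjointly A B (Function.update x kk true)
          (BKhyb k (Function.update x kk true) (Function.update y kk true)) then (1:ℝ) else 0)
      + (if OccursDisjointly A B (Function.update x kk true)
          (BKhyb k (Function.update x kk true) (Function.update y kk false)) then (1:ℝ) else 0)
      + (if OccursDisjointly A B (Function.update x kk false)
          (BKhyb k (Function.update x kk false) (Function.update y kk true)) then (1:ℝ) else 0)
      + (if OccursDisjointly A B (Function.update x kk false)
          (BKhyb k (Function.update x kk false) (Function.update y kk false)) then (1:ℝ) else 0)) := by
  set f : (Fin n → Bool) → (Fin n → Bool) → ℝ :=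
    fun x y => if OccursDisjointly A B x (BKhyb k x y) then (1:ℝ) else 0 with hf
  have inner : ∀ x : Fin n → Bool, 2 * ∑ y : Fin n → Bool, f x y
      = ∑ y : Fin n → Bool, (f x (Function.update y kk true) + f x (Function.update y kk false)) :=
    fun x => (BK_sum_update (fun y => f x y) kk).symm
  have houter : 2 * (2 * BKS A B k)
      = ∑ x : Fin n → Bool, ∑ y : Fin n → Bool,
          ((f (Function.update x kk true) (Function.update y kk true)
            + f (Function.update x kk true) (Function.update y kk false))
          + (f (Function.update x kk false) (Function.update y kk true)
            + f (Function.update x kk false) (Function.update y kk false))) := by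
    have hS : 2 * BKS A B k
        = ∑ x : Fin n → Bool, ∑ y : Fin n → Bool,
            (f x (Function.update y kk true) + f x (Function.update y kk false)) := by
      rw [BKS, Finset.mul_sum]
      exact Finset.sum_congr rfl fun x _ => inner x
    rw [hS, ← BK_sum_update (fun x => ∑ y : Fin n → Bool,
        (f x (Function.update y kk true) + f x (Function.update y kk false))) kk]
    simp only [← Finset.sum_add_distrib]
  calc 4 * BKS A B k = 2 * (2 * BKS A B k) := by ring
    _ = _ := by
      rw [houter]
      refine Finset.sum_congr rfl fun x _ => Finset.sum_congr rfl fun y _ => ?_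
      simp only [hf]
      ring

lemma BKS_step {n : ℕ} {A B : Set (Fin n → Bool)} (hA : IncreasingEvent A)
    (hB : IncreasingEvent B) (k : Fin n) :
    BKS A B k.1 ≤ BKS A B (k.1 + 1) := by
  have h4 : 4 * BKS A B k.1 ≤ 4 * BKS A B (k.1 + 1) := by
    rw [BKS_expand A B k.1 k, BKS_expand A B (k.1 + 1) k]
    apply Finset.sum_le_sum
    intro x _
    apply Finset.sum_le_sum
    intro y _
    have e1 := fun (a b : Bool) => BKhyb_update_self k x y a b
    have e2 := fun (a b : Bool) => BKhyb_update_succ k x y a b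
    rw [e1 true true, e1 true false, e1 false true, e1 false false,
        e2 true true, e2 true false, e2 false true, e2 false false]
    have := BK_block hA hB x (BKhyb k.1 x y) k
    linarith
  linarith

lemma BKS_mono {n : ℕ} {A B : Set (Fin n → Bool)} (hA : IncreasingEvent A)
    (hB : IncreasingEvent B) : ∀ m : ℕ, m ≤ n → BKS A B 0 ≤ BKS A B m := by
  intro m
  induction m with
  | zero => intro _; exact le_refl _
  | succ m ih =>
    intro hm
    have hmn : m < n := by omega
    exact le_trans (ih (by omega)) (BKS_step hA hB ⟨m, hmn⟩)

/-- Strong BK inequality for increasing events: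
`P[A ∘ B] ≤ P[(A,B) occurs disjointly on (ω,ξ)] ≤ P[A]·P[B]`. -/
theorem strong_BK {n : ℕ} (A B : Set (Fin n → Bool))
    (hA : IncreasingEvent A) (hB : IncreasingEvent B) :
    Pr (disjOcc A B) ≤ PrPairDisj A B ∧ PrPairDisj A B ≤ Pr A * Pr B := by
  have hcard : (Fintype.card (Fin n → Bool) : ℝ) = 2 ^ n := by
    simp [Fintype.card_fun]
  have hpos : (0:ℝ) < 2 ^ n := by positivity
  -- BKS at the endpoints
  have hS0 : BKS A B 0 = 2 ^ n * ((Finset.univ.filter fun x => x ∈ disjOcc A B).card : ℝ) := by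
    rw [BKS]
    have : ∀ x : Fin n → Bool, ∑ y : Fin n → Bool,
        (if OccursDisjointly A B x (BKhyb 0 x y) then (1:ℝ) else 0)
        = 2 ^ n * (if x ∈ disjOcc A B then (1:ℝ) else 0) := by
      intro x
      have : ∀ y : Fin n → Bool, (if OccursDisjointly A B x (BKhyb 0 x y) then (1:ℝ) else 0)
          = (if x ∈ disjOcc A B then (1:ℝ) else 0) := by
        intro y; rw [BKhyb_zero]; rfl
      rw [Finset.sum_congr rfl fun y _ => this y, Finset.sum_const, Finset.card_univ,
        nsmul_eq_mul, hcard]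
    rw [Finset.sum_congr rfl fun x _ => this x, ← Finset.mul_sum]
    congr 1
    simp [Finset.sum_boole]
  have hSn : BKS A B n = ∑ x : Fin n → Bool, ∑ y : Fin n → Bool,
      if OccursDisjointly A B x y then (1:ℝ) else 0 := by
    rw [BKS]
    refine Finset.sum_congr rfl fun x _ => Finset.sum_congr rfl fun y _ => ?_
    rw [BKhyb_top]
  constructor
  · -- first inequality
    have hmono := BKS_mono hA hB n le_rfl
    rw [hS0, hSn] at hmono
    rw [Pr, PrPairDisj]
    rw [div_le_div_iff₀ hpos (by positivity)]
    calc ((Finset.univ.filter fun x => x ∈ disjOcc A B).card : ℝ) * (2 ^ n * 2 ^ n)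
        = (2 ^ n * ((Finset.univ.filter fun x => x ∈ disjOcc A B).card : ℝ)) * 2 ^ n := by ring
      _ ≤ (∑ x : Fin n → Bool, ∑ y : Fin n → Bool,
            if OccursDisjointly A B x y then (1:ℝ) else 0) * 2 ^ n := by
          apply mul_le_mul_of_nonneg_right hmono (le_of_lt hpos)
  · -- second inequality
    have hnum : (∑ x : Fin n → Bool, ∑ y : Fin n → Bool,
        if OccursDisjointly A B x y then (1:ℝ) else 0)
        ≤ (∑ x : Fin n → Bool, if x ∈ A then (1:ℝ) else 0)
          * (∑ y : Fin n → Bool, if y ∈ B then (1:ℝ) else 0) := by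
      rw [Finset.sum_mul_sum]
      apply Finset.sum_le_sum
      intro x _
      apply Finset.sum_le_sum
      intro y _
      by_cases h : OccursDisjointly A B x y
      · obtain ⟨I, J, -, hI, hJ⟩ := id h
        have hxA : x ∈ A := BK_witness_self hI
        have hyB : y ∈ B := BK_witness_self hJ
        simp [h, hxA, hyB]
      · rw [if_neg h]
        split_ifs <;> norm_num
    have hA' : (∑ x : Fin n → Bool, if x ∈ A then (1:ℝ) else 0)
        = ((Finset.univ.filter fun x => x ∈ A).card : ℝ) := by simp [Finset.sum_boole]
    have hB' : (∑ y : Fin n → Bool, if y ∈ B then (1:ℝ) else 0)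
        = ((Finset.univ.filter fun y => y ∈ B).card : ℝ) := by simp [Finset.sum_boole]
    rw [hA', hB'] at hnum
    rw [PrPairDisj, Pr, Pr, div_mul_div_comm]
    gcongr
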